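/- The qutrit T gate T = diag(1, ζ, ζ⁸), with ζ = e^{2πi/9}, is not equal to any complex unit scalar multiple of a matrix with entries in the ring 𝕋[ω] = {a + bω : a, b ∈ ℤ[1/3]}. -/

import Mathlib

noncomputable def ζ : ℂ := Complex.exp (2 * Real.pi * Complex.I / 9)
noncomputable def ω : ℂ := ζ ^ 3

/-- The ring 𝕋[ω] of elements a + bω with a, b triadic fractions, as a subset of ℂ. -/
noncomputable def Tω : Set ℂ :=
  {z | ∃ (a b : ℤ) (m : ℕ), z = ((a : ℂ) + (b : ℂ) * ω) / 3 ^ m}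

noncomputable def T : Matrix (Fin 3) (Fin 3) ℂ := !![1, 0, 0; 0, ζ, 0; 0, 0, ζ ^ 8]

lemma zeta_primitive : IsPrimitiveRoot ζ 9 := by
  have := Complex.isPrimitiveRoot_exp 9 (by norm_num)
  convert this using 2
  simp only [ζ, Nat.cast_ofNat]

lemma key (p q r s : ℤ) (h : (p : ℂ) * ζ + (q : ℂ) * ζ ^ 4 = (r : ℂ) + (s : ℂ) * ζ ^ 3) :
    p = 0 ∧ q = 0 := by
  have hζ := zeta_primitive
  have hmin : minpoly ℚ ζ = Polynomial.cyclotomic 9 ℚ :=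
    (Polynomial.cyclotomic_eq_minpoly_rat hζ (by norm_num)).symm
  set g : Polynomial ℚ := Polynomial.C (p : ℚ) * Polynomial.X +
      Polynomial.C (q : ℚ) * Polynomial.X ^ 4 - Polynomial.C (r : ℚ) -
      Polynomial.C (s : ℚ) * Polynomial.X ^ 3 with hg
  have heval : Polynomial.aeval ζ g = 0 := by
    rw [hg]
    simp only [map_sub, map_add, map_mul, map_pow, Polynomial.aeval_C, Polynomial.aeval_X,
      eq_ratCast]
    push_cast
    linear_combination h
  have hg0 : g = 0 := by
    by_contra hne
    have hdvd : minpoly ℚ ζ ∣ g := minpoly.dvd ℚ ζ heval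
    have hle := Polynomial.natDegree_le_of_dvd hdvd hne
    rw [hmin, Polynomial.natDegree_cyclotomic] at hle
    have htot : Nat.totient 9 = 6 := by decide
    rw [htot] at hle
    have : g.natDegree ≤ 4 := by
      apply Polynomial.natDegree_le_iff_coeff_eq_zero.mpr
      intro n hn
      simp only [hg, Polynomial.coeff_sub, Polynomial.coeff_add, Polynomial.coeff_C_mul,
        Polynomial.coeff_X, Polynomial.coeff_X_pow, Polynomial.coeff_C]
      have h1 : ¬ (1 = n) := by omega
      have h3 : ¬ (n = 3) := by omega
      have h4 : ¬ (n = 4) := by omega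
      have h0 : ¬ (n = 0) := by omega
      simp [h1, h3, h4, h0]
    omega
  constructor
  · have := congrArg (fun f => Polynomial.coeff f 1) hg0
    simp only [hg, Polynomial.coeff_sub, Polynomial.coeff_add, Polynomial.coeff_C_mul,
      Polynomial.coeff_X, Polynomial.coeff_X_pow, Polynomial.coeff_C, Polynomial.coeff_zero] at this
    norm_num at this
    exact_mod_cast this
  · have := congrArg (fun f => Polynomial.coeff f 4) hg0
    simp only [hg, Polynomial.coeff_sub, Polynomial.coeff_add, Polynomial.coeff_C_mul,
      Polynomial.coeff_X, Polynomial.coeff_X_pow, Polynomial.coeff_C, Polynomial.coeff_zero] at this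
    norm_num at this
    exact_mod_cast this

theorem T_not_scalar_multiple_of_Tomega_matrix :
    ¬ ∃ (c : ℂ) (M : Matrix (Fin 3) (Fin 3) ℂ),
      ‖c‖ = 1 ∧ (∀ i j, M i j ∈ Tω) ∧ T = c • M := by
  rintro ⟨c, M, -, hM, hT⟩
  have h00 : (1 : ℂ) = c * M 0 0 := by
    have := congrFun (congrFun hT 0) 0
    simpa [T, Matrix.smul_apply, smul_eq_mul] using this
  have h11 : ζ = c * M 1 1 := by
    have := congrFun (congrFun hT 1) 1
    simpa [T, Matrix.smul_apply, smul_eq_mul] using this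
  have hc : c ≠ 0 := by
    intro h; rw [h, zero_mul] at h00; exact one_ne_zero h00
  have hM00 : M 0 0 ≠ 0 := by
    intro h; rw [h, mul_zero] at h00; exact one_ne_zero h00
  have hrel : ζ * M 0 0 = M 1 1 := by
    have : c * (ζ * M 0 0) = c * M 1 1 := by
      rw [← h11]; rw [mul_comm ζ (M 0 0), ← mul_assoc, ← h00, one_mul]
    exact mul_left_cancel₀ hc this
  obtain ⟨a, b, m, hab⟩ := hM 0 0
  obtain ⟨a', b', n, hab'⟩ := hM 1 1
  rw [hab, hab'] at hrel
  have h3 : (3 : ℂ) ≠ 0 := by norm_num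
  have heq : (a : ℂ) * 3 ^ n * ζ + (b : ℂ) * 3 ^ n * ζ ^ 4 =
      (a' : ℂ) * 3 ^ m + (b' : ℂ) * 3 ^ m * ζ ^ 3 := by
    have : ζ * ((a : ℂ) + b * ω) * 3 ^ n = ((a' : ℂ) + b' * ω) * 3 ^ m := by
      field_simp at hrel
      linear_combination hrel
    rw [ω] at this
    linear_combination this
  have := key (a * 3 ^ n) (b * 3 ^ n) (a' * 3 ^ m) (b' * 3 ^ m) (by push_cast; linear_combination heq)
  have ha : a = 0 := by
    have h3n : (3 : ℤ) ^ n ≠ 0 := by positivity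
    exact (mul_eq_zero.mp this.1).resolve_right h3n
  have hb : b = 0 := by
    have h3n : (3 : ℤ) ^ n ≠ 0 := by positivity
    exact (mul_eq_zero.mp this.2).resolve_right h3n
  apply hM00
  rw [hab, ha, hb]
  simp
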